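/- Let α ∈ (0,1), 0 ≤ t < τ ≤ T − η for some η ∈ (0, T−t), and ϑ ∈ (0,1]. Then ∫₀ᵗ [(t + ϑ(T−t) − ξ)^(α−1) − (τ + ϑ(T−τ) − ξ)^(α−1)] dξ ≤ (τ − t) / (ϑ^(1−α) η^(1−α)). -/

import Mathlib

open MeasureTheory Real Set Filter

/-- Mean value / Bernoulli bound: for `0 < x ≤ y` and `0 ≤ α ≤ 1`,
`y ^ α ≤ x ^ α + α * x ^ (α - 1) * (y - x)`. -/
lemma aux_mvt_rpow {x y α : ℝ} (hx : 0 < x) (hxy : x ≤ y) (hα0 : 0 ≤ α) (hα1 : α ≤ 1) :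
    y ^ α ≤ x ^ α + α * x ^ (α - 1) * (y - x) := by
  have hs : -1 ≤ (y - x) / x := by have h : 0 ≤ (y - x) / x := div_nonneg (by linarith) hx.le; linarith
  have hber := rpow_one_add_le_one_add_mul_self hs hα0 hα1
  have hy : y = x * (1 + (y - x) / x) := by field_simp; ring
  have hxα : 0 < x ^ α := Real.rpow_pos_of_pos hx α
  calc y ^ α = x ^ α * (1 + (y - x) / x) ^ α := by
        rw [← Real.mul_rpow hx.le (by linarith), ← hy]
    _ ≤ x ^ α * (1 + α * ((y - x) / x)) := by
        exact mul_le_mul_of_nonneg_left hber hxα.le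
    _ = x ^ α + α * x ^ (α - 1) * (y - x) := by
        rw [Real.rpow_sub_one hx.ne']
        field_simp

lemma aux_integral {c t α : ℝ} (_ht : 0 ≤ t) (_hc : t < c) (hα : 0 < α) :
    ∫ ξ in (0:ℝ)..t, (c - ξ) ^ (α - 1) = (c ^ α - (c - t) ^ α) / α := by
  rw [intervalIntegral.integral_comp_sub_left (fun x => x ^ (α - 1)) c,
    integral_rpow (Or.inl (by linarith : (-1:ℝ) < α - 1))]
  rw [sub_add_cancel, sub_zero]

theorem stmt_3 (α t τ T η ϑ : ℝ) (hα : α ∈ Set.Ioo (0:ℝ) 1)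
    (ht : 0 ≤ t) (htτ : t < τ) (hτ : τ ≤ T - η) (hη : η ∈ Set.Ioo 0 (T - t))
    (hϑ : ϑ ∈ Set.Ioc (0:ℝ) 1) :
    (∫ ξ in (0:ℝ)..t,
        ((t + ϑ * (T - t) - ξ) ^ (α - 1) - (τ + ϑ * (T - τ) - ξ) ^ (α - 1))) ≤
      (τ - t) / (ϑ ^ (1 - α) * η ^ (1 - α)) := by
  obtain ⟨hα0, hα1⟩ := hα
  obtain ⟨hη0, hηT⟩ := hη
  obtain ⟨hϑ0, hϑ1⟩ := hϑ
  set a := t + ϑ * (T - t) with ha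
  set b := τ + ϑ * (T - τ) with hb
  have hTτ : η ≤ T - τ := by linarith
  have hat : t < a := by nlinarith
  have hbt : t < b := by nlinarith
  have hab : a ≤ b := by nlinarith
  -- integrability on [0, t]
  have hint : ∀ c : ℝ, t < c →
      IntervalIntegrable (fun ξ => (c - ξ) ^ (α - 1)) volume 0 t := by
    intro c hc
    apply ContinuousOn.intervalIntegrable
    apply ContinuousOn.rpow_const
    · exact (continuous_const.sub continuous_id).continuousOn
    · intro x hx
      rw [Set.uIcc_of_le ht] at hx
      left
      exact ne_of_gt (by linarith [hx.2] : (0:ℝ) < c - x)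
  rw [intervalIntegral.integral_sub (hint a hat) (hint b hbt),
    aux_integral ht hat hα0, aux_integral ht hbt hα0]
  -- analytic bounds
  have h1 : a ^ α ≤ b ^ α := Real.rpow_le_rpow (by linarith) hab hα0.le
  have hx : 0 < a - t := by linarith
  have h2 : (b - t) ^ α ≤ (a - t) ^ α + α * (a - t) ^ (α - 1) * ((b - t) - (a - t)) :=
    aux_mvt_rpow hx (by linarith) hα0.le hα1.le
  have h3 : (a - t) ^ (α - 1) ≤ (ϑ * η) ^ (α - 1) := by
    apply Real.rpow_le_rpow_of_nonpos (by positivity) _ (by linarith)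
    have : η ≤ T - t := by linarith
    calc ϑ * η ≤ ϑ * (T - t) := by nlinarith
      _ = a - t := by ring
  have hba : b - a = (1 - ϑ) * (τ - t) := by rw [ha, hb]; ring
  have hba' : b - a ≤ τ - t := by nlinarith
  have hϑη : (0:ℝ) < (ϑ * η) ^ (α - 1) := Real.rpow_pos_of_pos (by positivity) _
  have hrw : (τ - t) / (ϑ ^ (1 - α) * η ^ (1 - α)) = (τ - t) * (ϑ * η) ^ (α - 1) := by
    rw [Real.mul_rpow hϑ0.le hη0.le, show α - 1 = -(1 - α) by ring,
      Real.rpow_neg hϑ0.le, Real.rpow_neg hη0.le]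
    have h₁ : (0:ℝ) < ϑ ^ (1 - α) := Real.rpow_pos_of_pos hϑ0 _
    have h₂ : (0:ℝ) < η ^ (1 - α) := Real.rpow_pos_of_pos hη0 _
    field_simp
  rw [hrw]
  have hkey : (a ^ α - (a - t) ^ α) / α - (b ^ α - (b - t) ^ α) / α
      ≤ (a - t) ^ (α - 1) * (b - a) := by
    rw [div_sub_div_same, div_le_iff₀ hα0]
    nlinarith
  calc (a ^ α - (a - t) ^ α) / α - (b ^ α - (b - t) ^ α) / α
      ≤ (a - t) ^ (α - 1) * (b - a) := hkey
    _ ≤ (ϑ * η) ^ (α - 1) * (b - a) := by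
        apply mul_le_mul_of_nonneg_right h3 (by linarith)
    _ ≤ (ϑ * η) ^ (α - 1) * (τ - t) := by
        exact mul_le_mul_of_nonneg_left hba' hϑη.le
    _ = (τ - t) * (ϑ * η) ^ (α - 1) := by ring
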